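/- Sum formula for Horadam quaternions: if α ≠ 1 and β ≠ 1, then for every natural number n, Σ_{i=0}^{n} Gᵢ = (1/(α−β))·( B·β̲·βⁿ⁺¹/(1−β) − A·α̲·αⁿ⁺¹/(1−α) ) + K, where K = (A·α̲·(1−β) − B·β̲·(1−α)) / ((α−β)(1−α)(1−β)). -/

import Mathlib

open Quaternion

/-- The Horadam sequence `w(a,b;p,q)`: `w₀ = a`, `w₁ = b`,
`wₙ = p·wₙ₋₁ + q·wₙ₋₂` for `n ≥ 2`. -/
def horadam (a b p q : ℝ) : ℕ → ℝ
  | 0 => a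
  | 1 => b
  | n + 2 => p * horadam a b p q (n + 1) + q * horadam a b p q n

/-- The `n`-th Horadam quaternion `Gₙ = wₙ + wₙ₊₁·i + wₙ₊₂·j + wₙ₊₃·k`. -/
def horadamQ (a b p q : ℝ) (n : ℕ) : ℍ[ℝ] :=
  ⟨horadam a b p q n, horadam a b p q (n + 1), horadam a b p q (n + 2), horadam a b p q (n + 3)⟩

set_option maxHeartbeats 1000000 in
/-- Sum formula for Horadam quaternions. -/
theorem horadamQ_sum (a b p q : ℝ) (hpq : p ^ 2 + 4 * q > 0)
    (α β A B : ℝ)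
    (hα : α = (p + Real.sqrt (p ^ 2 + 4 * q)) / 2)
    (hβ : β = (p - Real.sqrt (p ^ 2 + 4 * q)) / 2)
    (hA : A = b - a * β) (hB : B = b - a * α)
    (hα1 : α ≠ 1) (hβ1 : β ≠ 1)
    (αq βq K : ℍ[ℝ])
    (hαq : αq = ⟨1, α, α ^ 2, α ^ 3⟩) (hβq : βq = ⟨1, β, β ^ 2, β ^ 3⟩)
    (hK : K = ((α - β) * (1 - α) * (1 - β))⁻¹ • ((A * (1 - β)) • αq - (B * (1 - α)) • βq)) :
    ∀ n : ℕ, ∑ i ∈ Finset.range (n + 1), horadamQ a b p q i =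
      (α - β)⁻¹ • ((B * β ^ (n + 1) / (1 - β)) • βq - (A * α ^ (n + 1) / (1 - α)) • αq) + K := by
  have hs2 : Real.sqrt (p ^ 2 + 4 * q) ^ 2 = p ^ 2 + 4 * q := Real.sq_sqrt hpq.le
  have hspos : Real.sqrt (p ^ 2 + 4 * q) > 0 := Real.sqrt_pos.mpr hpq
  have hαβ : α - β ≠ 0 := by rw [hα, hβ]; intro h; nlinarith
  have h1α : 1 - α ≠ 0 := fun h => hα1 (by linarith [sub_eq_zero.mp h])
  have h1β : 1 - β ≠ 0 := fun h => hβ1 (by linarith [sub_eq_zero.mp h])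
  have hrα : α ^ 2 = p * α + q := by rw [hα]; field_simp; nlinarith
  have hrβ : β ^ 2 = p * β + q := by rw [hβ]; field_simp; nlinarith
  have binet : ∀ n, (α - β) * horadam a b p q n = A * α ^ n - B * β ^ n := by
    intro n
    induction n using Nat.twoStepInduction with
    | zero => simp [horadam, hA, hB]; ring
    | one => simp [horadam, hA, hB]; ring
    | more n ih0 ih1 =>
      show (α - β) * (p * horadam a b p q (n + 1) + q * horadam a b p q n) = _
      linear_combination p * ih1 + q * ih0 - A * α ^ n * hrα + B * β ^ n * hrβ
  have hw : ∀ i, horadam a b p q i = (A * α ^ i - B * β ^ i) / (α - β) := by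
    intro i
    rw [eq_div_iff hαβ, mul_comm]
    exact binet i
  have hαc : αq.re = 1 ∧ αq.imI = α ∧ αq.imJ = α ^ 2 ∧ αq.imK = α ^ 3 := by
    subst hαq; exact ⟨rfl, rfl, rfl, rfl⟩
  have hβc : βq.re = 1 ∧ βq.imI = β ∧ βq.imJ = β ^ 2 ∧ βq.imK = β ^ 3 := by
    subst hβq; exact ⟨rfl, rfl, rfl, rfl⟩
  have hGc : ∀ i, (horadamQ a b p q i).re = horadam a b p q i ∧
      (horadamQ a b p q i).imI = horadam a b p q (i + 1) ∧
      (horadamQ a b p q i).imJ = horadam a b p q (i + 2) ∧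
      (horadamQ a b p q i).imK = horadam a b p q (i + 3) := fun i => ⟨rfl, rfl, rfl, rfl⟩
  intro n
  induction n with
  | zero =>
    rw [Finset.sum_range_one]
    subst hK
    ext <;> simp [horadamQ, hw, hαc, hβc] <;> field_simp <;> ring
  | succ n ih =>
    rw [Finset.sum_range_succ, ih, add_right_comm]
    congr 1
    ext <;> simp [hGc, hw, hαc, hβc] <;> field_simp <;> ring
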